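/- Let Γ be a group, H a nontrivial complex Hilbert space, and π : Γ → U(H) a unitary representation. Let G ⊆ H be a countable set of vectors such that the family (π(γ) g), indexed by (γ,g) ∈ Γ × G, is complete in H and, for every g ∈ G, the family (π(γ) g)_{γ∈Γ} is Bessel in H. Then for every γ ∈ Γ of infinite order, the operator π(γ) has no eigenvalues: if π(γ) v = λ v for some λ ∈ ℂ and v ∈ H, then v = 0. -/

import Mathlib

open ContinuousLinearMap
open scoped InnerProductSpace ENNReal

/-- Let `π` be a unitary representation of a group `Γ` on a nontrivial complex Hilbert space
`H`, and `G ⊆ H` a countable set such that `{π(γ) g : γ ∈ Γ, g ∈ G}` is complete in `H` and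
each orbit `(π(γ) g)_{γ∈Γ}` is Bessel. Then for every `γ ∈ Γ` of infinite order, the operator
`π(γ)` has no eigenvalues. -/
theorem stmt_17 {H : Type*} [NormedAddCommGroup H] [InnerProductSpace ℂ H] [CompleteSpace H]
    [Nontrivial H]
    {Γ : Type*} [Group Γ] (π : Γ →* unitary (H →L[ℂ] H))
    (G : Set H) (hG : G.Countable)
    (hcomplete :
      (Submodule.span ℂ
        (Set.range fun p : Γ × ↥G => (π p.1 : H →L[ℂ] H) (p.2 : H))).topologicalClosure = ⊤)
    (hBessel : ∀ g ∈ G, ∃ β : ℝ, 0 < β ∧ ∀ f : H,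
      (∑' γ : Γ, (‖⟪f, (π γ : H →L[ℂ] H) g⟫_ℂ‖₊ : ℝ≥0∞) ^ 2) ≤ ENNReal.ofReal (β * ‖f‖ ^ 2)) :
    ∀ γ : Γ, (∀ m : ℕ, 0 < m → γ ^ m ≠ 1) →
      ∀ (lam : ℂ) (v : H), (π γ : H →L[ℂ] H) v = lam • v → v = 0 := by
  intro γ hγ lam v hv
  by_contra hv0
  -- |lam| = 1
  have hnorm : ‖(π γ : H →L[ℂ] H) v‖ = ‖v‖ := Unitary.norm_map (π γ) v
  have hlam : ‖lam‖ = 1 := by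
    rw [hv, norm_smul] at hnorm
    have hvne : ‖v‖ ≠ 0 := norm_ne_zero_iff.mpr hv0
    field_simp at hnorm
    exact hnorm
  -- powers act by lam^n
  have hpow : ∀ n : ℕ, (π (γ ^ n) : H →L[ℂ] H) v = lam ^ n • v := by
    intro n
    induction n with
    | zero =>
      rw [pow_zero, pow_zero, map_one, one_smul, OneMemClass.coe_one,
        ContinuousLinearMap.one_apply]
    | succ n ih =>
      rw [pow_succ γ n, map_mul, MulMemClass.coe_mul, ContinuousLinearMap.mul_apply, hv,
        map_smul, ih, smul_smul, pow_succ, mul_comm]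
  -- injectivity of n ↦ γ⁻¹ ^ n * δ
  have hinjpow : Function.Injective fun n : ℕ => γ ^ n := by
    intro n m h
    simp only at h
    by_contra hne
    rcases Nat.lt_or_ge n m with hlt | hge
    · have : γ ^ (m - n) * γ ^ n = γ ^ m := by rw [← pow_add, Nat.sub_add_cancel hlt.le]
      have h1 : γ ^ (m - n) = 1 := by
        have := this.trans h.symm
        exact mul_right_cancel (a := γ ^ (m - n)) (b := γ ^ n) (by simpa using this)
      exact hγ (m - n) (by omega) h1
    · have hlt : m < n := lt_of_le_of_ne hge (fun e => hne e.symm)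
      have : γ ^ (n - m) * γ ^ m = γ ^ n := by rw [← pow_add, Nat.sub_add_cancel hlt.le]
      have h1 : γ ^ (n - m) = 1 := by
        have := this.trans h
        exact mul_right_cancel (a := γ ^ (n - m)) (b := γ ^ m) (by simpa using this)
      exact hγ (n - m) (by omega) h1
  -- orthogonality to all π(δ) g
  have horth : ∀ (δ : Γ) (g : H), g ∈ G → ⟪v, (π δ : H →L[ℂ] H) g⟫_ℂ = 0 := by
    intro δ g hg
    obtain ⟨β, hβ, hB⟩ := hBessel g hg
    -- the key identity
    have key : ∀ n : ℕ, ⟪v, (π (γ⁻¹ ^ n * δ) : H →L[ℂ] H) g⟫_ℂ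
        = (starRingEnd ℂ) (lam ^ n) * ⟪v, (π δ : H →L[ℂ] H) g⟫_ℂ := by
      intro n
      have h1 := Unitary.inner_map_map (π (γ ^ n)) v ((π (γ⁻¹ ^ n * δ) : H →L[ℂ] H) g)
      have h2 : (π (γ ^ n) : H →L[ℂ] H) ((π (γ⁻¹ ^ n * δ) : H →L[ℂ] H) g)
          = (π δ : H →L[ℂ] H) g := by
        rw [← ContinuousLinearMap.mul_apply, ← MulMemClass.coe_mul, ← map_mul]
        congr 2
        rw [inv_pow, ← mul_assoc, mul_inv_cancel, one_mul]
      rw [h2, hpow] at h1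
      rw [← h1, inner_smul_left]
    have hinj : Function.Injective fun n : ℕ => γ⁻¹ ^ n * δ := by
      intro n m h
      simp only [inv_pow] at h
      have := mul_right_cancel h
      exact hinjpow (inv_injective this)
    have hle := ENNReal.tsum_comp_le_tsum_of_injective hinj
      (fun σ => (‖⟪v, (π σ : H →L[ℂ] H) g⟫_ℂ‖₊ : ℝ≥0∞) ^ 2)
    set c : ℝ≥0∞ := (‖⟪v, (π δ : H →L[ℂ] H) g⟫_ℂ‖₊ : ℝ≥0∞) ^ 2 with hc
    have hconst : ∀ n : ℕ, (‖⟪v, (π (γ⁻¹ ^ n * δ) : H →L[ℂ] H) g⟫_ℂ‖₊ : ℝ≥0∞) ^ 2 = c := by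
      intro n
      rw [hc]
      congr 1
      rw [key n]
      norm_cast
      rw [nnnorm_mul]
      have : ‖(starRingEnd ℂ) (lam ^ n)‖₊ = 1 := by
        have : ‖(starRingEnd ℂ) (lam ^ n)‖ = 1 := by
          rw [RCLike.norm_conj, norm_pow, hlam, one_pow]
        ext
        simpa using this
      rw [this, one_mul]
    by_contra hne
    have hcne : c ≠ 0 := by
      rw [hc]
      simp only [ne_eq, pow_eq_zero_iff, ENNReal.coe_eq_zero, nnnorm_eq_zero]
      norm_num
      exact hne
    have htop : (∑' n : ℕ, (‖⟪v, (π ((fun n : ℕ => γ⁻¹ ^ n * δ) n) : H →L[ℂ] H) g⟫_ℂ‖₊ : ℝ≥0∞) ^ 2)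
        = ⊤ := by
      calc (∑' n : ℕ, (‖⟪v, (π ((fun n : ℕ => γ⁻¹ ^ n * δ) n) : H →L[ℂ] H) g⟫_ℂ‖₊ : ℝ≥0∞) ^ 2)
          = ∑' _ : ℕ, c := tsum_congr hconst
        _ = ⊤ := ENNReal.tsum_const_eq_top_of_ne_zero hcne
    have : (⊤ : ℝ≥0∞) ≤ ENNReal.ofReal (β * ‖v‖ ^ 2) := by
      calc (⊤ : ℝ≥0∞) = _ := htop.symm
        _ ≤ ∑' σ : Γ, (‖⟪v, (π σ : H →L[ℂ] H) g⟫_ℂ‖₊ : ℝ≥0∞) ^ 2 := hle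
        _ ≤ ENNReal.ofReal (β * ‖v‖ ^ 2) := hB v
    exact absurd (le_antisymm le_top this) (by simp [ENNReal.ofReal_lt_top.ne])
  -- density argument
  have hker : (Submodule.span ℂ
      (Set.range fun p : Γ × ↥G => (π p.1 : H →L[ℂ] H) (p.2 : H))).topologicalClosure
      ≤ LinearMap.ker (innerSL ℂ v : H →ₗ[ℂ] ℂ) := by
    apply Submodule.topologicalClosure_minimal
    · rw [Submodule.span_le]
      rintro x ⟨⟨δ, g⟩, rfl⟩
      simp only [SetLike.mem_coe, LinearMap.mem_ker]
      exact horth δ g g.2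
    · exact ContinuousLinearMap.isClosed_ker (innerSL ℂ v)
  have hvker : v ∈ LinearMap.ker (innerSL ℂ v : H →ₗ[ℂ] ℂ) := hker (hcomplete ▸ Submodule.mem_top)
  have : ⟪v, v⟫_ℂ = 0 := hvker
  exact hv0 (inner_self_eq_zero.mp this)
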